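/- Completeness of shifting: for every clause set M, if sh(M) is satisfiable then M is satisfiable, where sh = pf followed by bs, i.e. sh(M) = bs(pf(M)). -/

import Mathlib

namespace BUMG

/-- First-order terms over function symbols `F`, with variables indexed by `ℕ`. -/
inductive Term (F : Type) : Type where
  | var : ℕ → Term F
  | app : F → List (Term F) → Term F

namespace Term
variable {F : Type}

/-- The list of variables occurring in a term. -/
def vars : Term F → List ℕ
  | var n => [n]
  | app _ ts => ts.attach.flatMap (fun t => vars t.1)
decreasing_by simp_wf; have := List.sizeOf_lt_of_mem t.2; omega

/-- The function symbols (with the arity of the occurrence) occurring in a term. -/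
def funcs : Term F → List (F × ℕ)
  | var _ => []
  | app f ts => (f, ts.length) :: ts.attach.flatMap (fun t => funcs t.1)
decreasing_by simp_wf; have := List.sizeOf_lt_of_mem t.2; omega

/-- Applying a substitution to a term. -/
def subst (g : ℕ → Term F) : Term F → Term F
  | var n => g n
  | app f ts => app f (ts.attach.map (fun t => subst g t.1))
decreasing_by simp_wf; have := List.sizeOf_lt_of_mem t.2; omega

/-- The number of occurrences of symbols (variables and function symbols) in a term. -/
def size : Term F → ℕ
  | var _ => 1
  | app _ ts => 1 + (ts.attach.map (fun t => size t.1)).sum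
decreasing_by simp_wf; have := List.sizeOf_lt_of_mem t.2; omega

/-- A term is ground iff it contains no variables. -/
def IsGround (t : Term F) : Prop := t.vars = []

def isVar : Term F → Bool
  | var _ => true
  | app _ _ => false

/-- A proper functional term is a term that is neither a variable nor a constant. -/
def isPF : Term F → Bool
  | app _ (_ :: _) => true
  | _ => false

/-- The subterm relation. -/
inductive Subterm : Term F → Term F → Prop
  | refl (t : Term F) : Subterm t t
  | app {s t : Term F} {f : F} {ts : List (Term F)} :
      t ∈ ts → Subterm s t → Subterm s (app f ts)

end Term

/-- Atoms over predicate symbols `P` and function symbols `F`. -/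
structure Atom (P F : Type) where
  pred : P
  args : List (Term F)

namespace Atom
variable {P F : Type}

def subst (g : ℕ → Term F) (a : Atom P F) : Atom P F := ⟨a.pred, a.args.map (Term.subst g)⟩
def vars (a : Atom P F) : List ℕ := a.args.flatMap Term.vars
def IsGround (a : Atom P F) : Prop := a.vars = []
def funcs (a : Atom P F) : List (F × ℕ) := a.args.flatMap Term.funcs
/-- Whether the atom contains a proper functional term. -/
def hasPF (a : Atom P F) : Bool := a.args.any Term.isPF
def size (a : Atom P F) : ℕ := 1 + (a.args.map Term.size).sum

end Atom

/-- A clause `H₁ ∨ ... ∨ Hₘ ← B₁ ∧ ... ∧ Bₖ` with head atoms `heads`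
and body atoms `body`. -/
structure Clause (P F : Type) where
  heads : List (Atom P F)
  body : List (Atom P F)

namespace Clause
variable {P F : Type}

def atoms (C : Clause P F) : List (Atom P F) := C.heads ++ C.body
def vars (C : Clause P F) : List ℕ := C.atoms.flatMap Atom.vars
def bodyVars (C : Clause P F) : List ℕ := C.body.flatMap Atom.vars
def headVars (C : Clause P F) : List ℕ := C.heads.flatMap Atom.vars
def maxVar (C : Clause P F) : ℕ := C.vars.foldr max 0
def subst (g : ℕ → Term F) (C : Clause P F) : Clause P F :=
  ⟨C.heads.map (Atom.subst g), C.body.map (Atom.subst g)⟩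
/-- The predicate symbols (with the arity of the occurrence) occurring in a clause. -/
def preds (C : Clause P F) : List (P × ℕ) := C.atoms.map (fun a => (a.pred, a.args.length))
/-- The function symbols (with the arity of the occurrence) occurring in a clause. -/
def funcs (C : Clause P F) : List (F × ℕ) := C.atoms.flatMap Atom.funcs
/-- The number of occurrences of symbols in a clause. -/
def size (C : Clause P F) : ℕ := (C.atoms.map Atom.size).sum

/-- A clause is range-restricted iff every variable occurring in it occurs in its body. -/
def RangeRestricted (C : Clause P F) : Prop := ∀ v ∈ C.vars, v ∈ C.bodyVars

/-- A Bernays–Schönfinkel clause: every functional term occurring in it is a constant. -/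
def BS (C : Clause P F) : Prop := ∀ fn ∈ C.funcs, fn.2 = 0

end Clause

/-- A clause set is range-restricted iff all its clauses are. -/
def RangeRestrictedSet {P F : Type} (M : Set (Clause P F)) : Prop :=
  ∀ C ∈ M, C.RangeRestricted

/-- The predicate symbols (with arities) occurring in a clause set. -/
def predsOf {P F : Type} (M : Set (Clause P F)) : Set (P × ℕ) :=
  { pn | ∃ C ∈ M, pn ∈ C.preds }

/-- The function symbols (with arities) occurring in a clause set. -/
def funcsOf {P F : Type} (M : Set (Clause P F)) : Set (F × ℕ) :=
  { fn | ∃ C ∈ M, fn ∈ C.funcs }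

/-- A signature: a set of predicate symbols with arities and
a set of function symbols with arities. -/
structure Sig (P F : Type) where
  preds : Set (P × ℕ)
  funcs : Set (F × ℕ)

/-- The clause set `M` is well-formed over the signature `σ`: all symbols occurring in `M`
belong to `σ` (with matching arities). -/
def WFSet {P F : Type} (σ : Sig P F) (M : Set (Clause P F)) : Prop :=
  ∀ C ∈ M, (∀ pn ∈ C.preds, pn ∈ σ.preds) ∧ (∀ fn ∈ C.funcs, fn ∈ σ.funcs)

/-- The total number of occurrences of symbols in a clause set. -/
noncomputable def setSize {P F : Type} (M : Set (Clause P F)) : ℕ :=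
  ∑ᶠ C ∈ M, C.size

/-! ### Herbrand semantics -/

/-- A substitution is ground iff it maps every variable to a ground term. -/
def GroundSubst {F : Type} (g : ℕ → Term F) : Prop := ∀ n, (g n).IsGround

/-- A (Herbrand) interpretation `I` (a set of ground atoms) satisfies a clause iff
it satisfies every ground instance of it. -/
def satClause {P F : Type} (I : Set (Atom P F)) (C : Clause P F) : Prop :=
  ∀ g : ℕ → Term F, GroundSubst g →
    (∀ a ∈ C.body, a.subst g ∈ I) → ∃ a ∈ C.heads, a.subst g ∈ I

/-- A clause set is satisfiable iff some Herbrand interpretation (a set of ground atoms)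
satisfies every ground instance of every clause of it. -/
def Satisfiable {P F : Type} (M : Set (Clause P F)) : Prop :=
  ∃ I : Set (Atom P F), (∀ a ∈ I, a.IsGround) ∧ ∀ C ∈ M, satClause I C

/-! ### Equality axioms and E-satisfiability -/

/-- The equality atom `s ≈ t` (`eqP` being the distinguished equality predicate `≈`). -/
def eqAtom {P F : Type} (eqP : P) (s t : Term F) : Atom P F := ⟨eqP, [s, t]⟩

def rangeVars {F : Type} (n : ℕ) : List (Term F) := (List.range n).map Term.var

def xsList {F : Type} (n : ℕ) : List (Term F) := (List.range n).map (fun i => Term.var (2*i))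
def ysList {F : Type} (n : ℕ) : List (Term F) := (List.range n).map (fun i => Term.var (2*i+1))
def eqConjList {P F : Type} (eqP : P) (n : ℕ) : List (Atom P F) :=
  (List.range n).map (fun i => eqAtom eqP (Term.var (2*i)) (Term.var (2*i+1)))

/-- The equality axioms `EAX`: `≈` is reflexive, symmetric, transitive and compatible with
the given function and predicate symbols. -/
def EAX {P F : Type} (eqP : P) (Ps : Set (P × ℕ)) (Fs : Set (F × ℕ)) : Set (Clause P F) :=
  { ⟨[eqAtom eqP (Term.var 0) (Term.var 0)], []⟩,
    ⟨[eqAtom eqP (Term.var 1) (Term.var 0)], [eqAtom eqP (Term.var 0) (Term.var 1)]⟩,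
    ⟨[eqAtom eqP (Term.var 0) (Term.var 2)],
      [eqAtom eqP (Term.var 0) (Term.var 1), eqAtom eqP (Term.var 1) (Term.var 2)]⟩ } ∪
  { D | ∃ fn ∈ Fs,
      D = ⟨[eqAtom eqP (Term.app fn.1 (xsList fn.2)) (Term.app fn.1 (ysList fn.2))],
           eqConjList eqP fn.2⟩ } ∪
  { D | ∃ pn ∈ Ps,
      D = ⟨[⟨pn.1, ysList pn.2⟩], ⟨pn.1, xsList pn.2⟩ :: eqConjList eqP pn.2⟩ }

/-- A clause set `M` is E-satisfiable iff `M` together with the equality axioms for the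
symbols occurring in `M` is satisfiable. -/
def ESatisfiable {P F : Type} (eqP : P) (M : Set (Clause P F)) : Prop :=
  Satisfiable (M ∪ EAX eqP (predsOf M) (funcsOf M))

/-! ### Range-restricting transformations -/

/-- The atom `dom(t)`. -/
def domAtom {P F : Type} (domP : P) (t : Term F) : Atom P F := ⟨domP, [t]⟩

/-- The term `c` for a constant `c`. -/
def cTerm {F : Type} (c : F) : Term F := Term.app c []

/-- The clause `dom(c) ← ⊤`. -/
def domcClause {P F : Type} (domP : P) (c : F) : Clause P F :=
  ⟨[domAtom domP (cTerm c)], []⟩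

/-- Range-restricting a clause (Step (2) of `crr`, Step (3) of `rr`):
`H ← B` becomes `H ← B ∧ dom(x₁) ∧ ... ∧ dom(xₖ)` where `x₁,...,xₖ` are the variables
occurring in the head but not in the body. -/
def rangeRestrictClause {P F : Type} (domP : P) (C : Clause P F) : Clause P F :=
  ⟨C.heads, C.body ++
    ((C.headVars.filter (fun v => v ∉ C.bodyVars)).dedup).map
      (fun v => domAtom domP (Term.var v))⟩

/-- The argument list of the term abstraction of an atom: argument positions holding
non-variable terms are replaced by fresh variables. -/
def abstrArgs {F : Type} (base : ℕ) (ts : List (Term F)) : List (Term F) :=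
  ts.mapIdx (fun i t => if t.isVar then t else Term.var (base + i))

/-- Step (2) of the `rr` transformation: for each clause `H ← B` of `M`, each body atom
`P(t₁,...,tₙ)` of `B` with term abstraction `P(s₁,...,sₙ)` and abstraction substitution `α`,
the clauses `dom(xᵢ)α ← P(s₁,...,sₙ)` for every `xᵢ` in the domain of `α`. -/
def step2Set {P F : Type} (domP : P) (M : Set (Clause P F)) : Set (Clause P F) :=
  { D | ∃ C ∈ M, ∃ a ∈ C.body, ∃ i : Fin a.args.length,
        (a.args.get i).isVar = false ∧
        D = ⟨[domAtom domP (a.args.get i)],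
             [⟨a.pred, abstrArgs (C.maxVar + 1) a.args⟩]⟩ }

/-- Step (4) of the `rr` transformation: the clauses `dom(xᵢ) ← P(x₁,...,xₙ)` for every
`n`-ary predicate symbol `P` of the signature and every `1 ≤ i ≤ n`. -/
def step4Set {P F : Type} (domP : P) (Ps : Set (P × ℕ)) : Set (Clause P F) :=
  { D | ∃ pn ∈ Ps, ∃ i, i < pn.2 ∧
        D = ⟨[domAtom domP (Term.var i)], [⟨pn.1, rangeVars pn.2⟩]⟩ }

/-- Step (5) of the `rr` transformation: the clauses `dom(xᵢ) ← dom(f(x₁,...,xₙ))` for every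
`n`-ary function symbol `f` of the signature and every `1 ≤ i ≤ n`. -/
def step5Set {P F : Type} (domP : P) (Fs : Set (F × ℕ)) : Set (Clause P F) :=
  { D | ∃ fn ∈ Fs, ∃ i, i < fn.2 ∧
        D = ⟨[domAtom domP (Term.var i)],
             [domAtom domP (Term.app fn.1 (rangeVars fn.2))]⟩ }

/-- The new range-restricting transformation `rr` (over the signature `σ`, with fresh unary
predicate symbol `dom` and constant `c`): the clauses of `M`, the clause `dom(c) ← ⊤` and
the Step-(2) clauses, all range-restricted by Step (3), together with the Step-(4) and
Step-(5) clauses. -/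
def rr {P F : Type} [DecidableEq P] [DecidableEq F] (σ : Sig P F) (domP : P) (c : F)
    (M : Set (Clause P F)) : Set (Clause P F) :=
  (rangeRestrictClause domP '' (M ∪ {domcClause domP c} ∪ step2Set domP M))
  ∪ step4Set domP σ.preds ∪ step5Set domP σ.funcs

/-- Step (3) of the classical transformation `crr`: the clauses
`dom(f(x₁,...,xₙ)) ← dom(x₁) ∧ ... ∧ dom(xₙ)` enumerating the Herbrand universe. -/
def crrStep3 {P F : Type} (domP : P) (Fs : Set (F × ℕ)) : Set (Clause P F) :=
  { D | ∃ fn ∈ Fs,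
        D = ⟨[domAtom domP (Term.app fn.1 (rangeVars fn.2))],
             (List.range fn.2).map (fun i => domAtom domP (Term.var i))⟩ }

/-- The classical range-restricting transformation `crr`. -/
def crr {P F : Type} [DecidableEq P] [DecidableEq F] (σ : Sig P F) (domP : P) (c : F)
    (M : Set (Clause P F)) : Set (Clause P F) :=
  (rangeRestrictClause domP '' (M ∪ {domcClause domP c})) ∪ crrStep3 domP σ.funcs

/-! ### Shifting -/

/-- Partial flattening of the arguments of a non-equational body atom: top-level proper
functional terms are replaced by fresh variables. The `j`-th body atom uses the fresh
variables `base + Nat.pair j i`. -/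
def pfArgs {P F : Type} [DecidableEq P] (eqP : P) (base j : ℕ) (a : Atom P F) : Atom P F :=
  if a.pred = eqP then a
  else ⟨a.pred, a.args.mapIdx (fun i t => if t.isPF then Term.var (base + Nat.pair j i) else t)⟩

/-- The equations `tᵢ ≈ xᵢ` introduced by partially flattening a body atom. -/
def pfEqs {P F : Type} [DecidableEq P] (eqP : P) (base j : ℕ) (a : Atom P F) :
    List (Atom P F) :=
  if a.pred = eqP then []
  else (a.args.mapIdx (fun i t => (i, t))).filterMap
        (fun p => if p.2.isPF then
            some (eqAtom eqP p.2 (Term.var (base + Nat.pair j p.1))) else none)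

/-- Partial flattening of a clause. -/
def pfClause {P F : Type} [DecidableEq P] (eqP : P) (C : Clause P F) : Clause P F :=
  ⟨C.heads,
   C.body.mapIdx (fun j a => pfArgs eqP (C.maxVar + 1) j a) ++
   (C.body.mapIdx (fun j a => pfEqs eqP (C.maxVar + 1) j a)).flatten⟩

/-- The reflexivity unit clause `x ≈ x ← ⊤`. -/
def reflClause {P F : Type} (eqP : P) : Clause P F :=
  ⟨[eqAtom eqP (Term.var 0) (Term.var 0)], []⟩

/-- The partial flattening transformation `pf`. -/
def pf {P F : Type} [DecidableEq P] (eqP : P) (M : Set (Clause P F)) : Set (Clause P F) :=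
  pfClause eqP '' M ∪ {reflClause eqP}

/-- The atom `P̄(t₁,...,tₙ)` for the atom `P(t₁,...,tₙ)`, where `bar` maps each predicate
symbol `P` to the fresh predicate symbol `P̄` uniquely associated with it. -/
def barAtom {P F : Type} (bar : P → P) (a : Atom P F) : Atom P F := ⟨bar a.pred, a.args⟩

/-- Basic shifting of a clause: the body atoms containing a proper functional term are
moved, negated (via `bar`), into the head. -/
def bsClause {P F : Type} (bar : P → P) (C : Clause P F) : Clause P F :=
  ⟨C.heads ++ (C.body.filter (fun a => a.hasPF)).map (barAtom bar),
   C.body.filter (fun a => !a.hasPF)⟩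

/-- The predicate symbols (with arities) of shifted atoms of `M`. -/
def shiftedPreds {P F : Type} (M : Set (Clause P F)) : Set (P × ℕ) :=
  { pn | ∃ C ∈ M, ∃ a ∈ C.body, a.hasPF = true ∧ pn = (a.pred, a.args.length) }

/-- The basic shifting transformation `bs`: shift deep body atoms and add the shifted atom
consistency clauses `⊥ ← P(x₁,...,xₙ) ∧ P̄(x₁,...,xₙ)`. -/
def bs {P F : Type} (bar : P → P) (M : Set (Clause P F)) : Set (Clause P F) :=
  bsClause bar '' M ∪
  { D | ∃ pn ∈ shiftedPreds M,
        D = ⟨[], [⟨pn.1, rangeVars pn.2⟩, ⟨bar pn.1, rangeVars pn.2⟩]⟩ }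

/-- The shifting transformation: `sh(M) = bs(pf(M))`. -/
def sh {P F : Type} [DecidableEq P] (eqP : P) (bar : P → P) (M : Set (Clause P F)) :
    Set (Clause P F) :=
  bs bar (pf eqP M)

/-! ### Blocking -/

/-- The head `x ≈ y ∨ x ≉ y` of the blocking clauses. -/
def blockSplitHead {P F : Type} (eqP neqP : P) : List (Atom P F) :=
  [eqAtom eqP (Term.var 0) (Term.var 1), eqAtom neqP (Term.var 0) (Term.var 1)]

/-- The clause `⊥ ← x ≈ y ∧ x ≉ y`. -/
def eqNeqBot {P F : Type} (eqP neqP : P) : Clause P F :=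
  ⟨[], [eqAtom eqP (Term.var 0) (Term.var 1), eqAtom neqP (Term.var 0) (Term.var 1)]⟩

/-- The unrestricted domain blocking transformation `blud`. -/
def blud {P F : Type} (domP eqP neqP : P) (M : Set (Clause P F)) : Set (Clause P F) :=
  M ∪ { ⟨blockSplitHead eqP neqP, [domAtom domP (Term.var 0), domAtom domP (Term.var 1)]⟩,
        eqNeqBot eqP neqP }

/-- The atom `sub(s,t)`. -/
def subAtom {P F : Type} (subP : P) (s t : Term F) : Atom P F := ⟨subP, [s, t]⟩

/-- The axioms describing the subterm relationship: `sub(x,x) ← dom(x)` and, for every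
`n`-ary function symbol `f` of the signature and `1 ≤ i ≤ n`,
`sub(x, f(x₁,...,xₙ)) ← sub(x,xᵢ) ∧ dom(x) ∧ dom(f(x₁,...,xₙ))`. -/
def subClauses {P F : Type} (domP subP : P) (Fs : Set (F × ℕ)) : Set (Clause P F) :=
  { ⟨[subAtom subP (Term.var 0) (Term.var 0)], [domAtom domP (Term.var 0)]⟩ } ∪
  { D | ∃ fn ∈ Fs, ∃ i, i < fn.2 ∧
        D = ⟨[subAtom subP (Term.var fn.2) (Term.app fn.1 (rangeVars fn.2))],
             [subAtom subP (Term.var fn.2) (Term.var i),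
              domAtom domP (Term.var fn.2),
              domAtom domP (Term.app fn.1 (rangeVars fn.2))]⟩ }

/-- The subterm domain blocking transformation `blsd`. -/
def blsd {P F : Type} (σ : Sig P F) (domP eqP neqP subP : P) (M : Set (Clause P F)) :
    Set (Clause P F) :=
  M ∪ subClauses domP subP σ.funcs ∪
  { ⟨blockSplitHead eqP neqP, [subAtom subP (Term.var 0) (Term.var 1)]⟩,
    eqNeqBot eqP neqP }

/-- The subterm predicate blocking transformation `blsp`. -/
def blsp {P F : Type} (σ : Sig P F) (domP eqP neqP subP : P) (M : Set (Clause P F)) :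
    Set (Clause P F) :=
  M ∪ subClauses domP subP σ.funcs ∪
  { D | ∃ p : P, (p, 1) ∈ σ.preds ∧
        D = ⟨blockSplitHead eqP neqP,
             [subAtom subP (Term.var 0) (Term.var 1),
              ⟨p, [Term.var 0]⟩, ⟨p, [Term.var 1]⟩]⟩ } ∪
  { eqNeqBot eqP neqP }

/-- The unrestricted predicate blocking transformation `blup`. -/
def blup {P F : Type} (σ : Sig P F) (domP eqP neqP : P) (M : Set (Clause P F)) :
    Set (Clause P F) :=
  M ∪ { D | ∃ p : P, (p, 1) ∈ σ.preds ∧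
        D = ⟨blockSplitHead eqP neqP, [⟨p, [Term.var 0]⟩, ⟨p, [Term.var 1]⟩]⟩ } ∪
  { eqNeqBot eqP neqP }

/-! ### Combined transformations -/

/-- The base transformations `rr`, `sh∘rr`, `crr`, `sh∘crr`
(composition read left-to-right, so `(sh∘rr)(M) = rr(sh(M))`). -/
inductive BaseTr | rr | shrr | crr | shcrr

/-- The optional blocking transformations. -/
inductive BlockTr | id | blsd | blsp | blud | blup

def applyBase {P F : Type} [DecidableEq P] [DecidableEq F] (σ : Sig P F) (domP : P) (c : F)
    (eqP : P) (bar : P → P) : BaseTr → Set (Clause P F) → Set (Clause P F)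
  | .rr, M => rr σ domP c M
  | .shrr, M => rr σ domP c (sh eqP bar M)
  | .crr, M => crr σ domP c M
  | .shcrr, M => crr σ domP c (sh eqP bar M)

def applyBlock {P F : Type} (σ : Sig P F) (domP eqP neqP subP : P) :
    BlockTr → Set (Clause P F) → Set (Clause P F)
  | .id, M => M
  | .blsd, M => blsd σ domP eqP neqP subP M
  | .blsp, M => blsp σ domP eqP neqP subP M
  | .blud, M => blud domP eqP neqP M
  | .blup, M => blup σ domP eqP neqP M

/-- A combined transformation: a base transformation optionally followed by a blocking
transformation (composition read left-to-right). -/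
def applyTr {P F : Type} [DecidableEq P] [DecidableEq F] (σ : Sig P F) (domP : P) (c : F)
    (eqP neqP subP : P) (bar : P → P) (b : BaseTr) (τ : BlockTr) (M : Set (Clause P F)) :
    Set (Clause P F) :=
  applyBlock σ domP eqP neqP subP τ (applyBase σ domP c eqP bar b M)

/-- The clause `x ≈ x ← dom(x)`. -/
def reflDomClause {P F : Type} (domP eqP : P) : Clause P F :=
  ⟨[eqAtom eqP (Term.var 0) (Term.var 0)], [domAtom domP (Term.var 0)]⟩

end BUMG

namespace BUMG
section AuxShift
variable {P F : Type}

theorem Term.subst_var (g : ℕ → Term F) (n : ℕ) : (Term.var n).subst g = g n := by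
  simp [Term.subst]

theorem Term.subst_app (g : ℕ → Term F) (f : F) (ts : List (Term F)) :
    (Term.app f ts).subst g = Term.app f (ts.map (Term.subst g)) := by
  rw [Term.subst]; simp

theorem Term.vars_app (f : F) (ts : List (Term F)) :
    (Term.app f ts).vars = ts.flatMap Term.vars := by
  rw [Term.vars]; simp

theorem Term.subst_congr : ∀ (t : Term F) {g g' : ℕ → Term F},
    (∀ v ∈ t.vars, g v = g' v) → t.subst g = t.subst g'
  | .var n, g, g', h => by
      simp only [Term.subst_var]; exact h n (by simp [Term.vars])
  | .app f ts, g, g', h => by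
      rw [Term.subst_app, Term.subst_app]
      congr 1
      refine List.map_congr_left (fun t ht => ?_)
      exact Term.subst_congr t (fun v hv => h v (by
        rw [Term.vars_app]; exact List.mem_flatMap.2 ⟨t, ht, hv⟩))
  decreasing_by have := List.sizeOf_lt_of_mem ht; simp_wf; omega

theorem Term.subst_ground : ∀ (t : Term F) {g : ℕ → Term F},
    GroundSubst g → (t.subst g).IsGround
  | .var n, g, hg => by simpa [Term.subst_var] using hg n
  | .app f ts, g, hg => by
      rw [Term.subst_app]
      show (Term.app f (ts.map (Term.subst g))).vars = []
      rw [Term.vars_app, List.flatMap_eq_nil_iff]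
      rintro l hl
      rcases List.mem_map.1 hl with ⟨t, ht, rfl⟩
      exact Term.subst_ground t hg
  decreasing_by have := List.sizeOf_lt_of_mem ht; simp_wf; omega

theorem Atom.subst_congr (a : Atom P F) {g g' : ℕ → Term F}
    (h : ∀ v ∈ a.vars, g v = g' v) : a.subst g = a.subst g' := by
  unfold Atom.subst
  congr 1
  refine List.map_congr_left (fun t ht => ?_)
  exact Term.subst_congr t (fun v hv => h v (List.mem_flatMap.2 ⟨t, ht, hv⟩))

theorem Atom.subst_ground (a : Atom P F) {g : ℕ → Term F} (hg : GroundSubst g) :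
    (a.subst g).IsGround := by
  show (a.subst g).vars = []
  unfold Atom.vars Atom.subst
  rw [List.flatMap_eq_nil_iff]
  rintro l hl
  rcases List.mem_map.1 hl with ⟨t, ht, rfl⟩
  exact Term.subst_ground t hg

theorem le_foldr_max {l : List ℕ} {v : ℕ} (h : v ∈ l) : v ≤ l.foldr max 0 := by
  induction l with
  | nil => simp at h
  | cons a l ih =>
      rcases List.mem_cons.1 h with rfl | h
      · exact le_max_left _ _
      · exact le_trans (ih h) (le_max_right _ _)

theorem mem_vars_le_maxVar {C : Clause P F} {v : ℕ} (h : v ∈ C.vars) : v ≤ C.maxVar :=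
  le_foldr_max h

theorem mem_vars_of_mem_atom {C : Clause P F} {a : Atom P F} (ha : a ∈ C.atoms)
    {v : ℕ} (hv : v ∈ a.vars) : v ∈ C.vars :=
  List.mem_flatMap.2 ⟨a, ha, hv⟩

end AuxShift

/-- **Completeness of shifting** (Proposition 2): for every clause set `M`, if `sh(M)` is
satisfiable then `M` is satisfiable, where `sh(M) = bs(pf(M))`. -/
theorem sh_completeness {P F : Type} [DecidableEq P] [DecidableEq F]
    (eqP : P) (bar : P → P) (M : Set (Clause P F)) (hfin : M.Finite)
    (hbarInj : Function.Injective bar)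
    (hbarFresh : ∀ p n, (bar p, n) ∉ predsOf (pf eqP M))
    (hsat : Satisfiable (sh eqP bar M)) :
    Satisfiable M := by
  classical
  obtain ⟨I, hIg, hI⟩ := hsat
  -- reflexivity instances are in I
  have hrefl : ∀ t : Term F, t.IsGround → (⟨eqP, [t, t]⟩ : Atom P F) ∈ I := by
    intro t ht
    have hmem : bsClause bar (reflClause eqP) ∈ sh eqP bar M :=
      Set.mem_union_left _ ⟨reflClause eqP, Set.mem_union_right _ rfl, rfl⟩
    have := hI _ hmem (fun _ => t) (fun _ => ht)
      (by intro a ha; simp [bsClause, reflClause] at ha)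
    rcases this with ⟨a, ha, hmemI⟩
    simp only [bsClause, reflClause, List.filter_nil, List.map_nil, List.append_nil,
      List.mem_singleton] at ha
    subst ha
    simpa [eqAtom, Atom.subst, Term.subst_var] using hmemI
  refine ⟨I, hIg, ?_⟩
  intro C hC g hg hbody
  set base := C.maxVar + 1 with hbase
  -- the extended substitution
  set g' : ℕ → Term F := fun v =>
    if base ≤ v then
      let a := C.body.getD (Nat.unpair (v - base)).1 ⟨eqP, []⟩
      if a.pred = eqP then g v
      else
        let t := a.args.getD (Nat.unpair (v - base)).2 (Term.var 0)
        if t.isPF then t.subst g else g v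
    else g v with hg'def
  have hg' : GroundSubst g' := by
    intro v
    simp only [hg'def]
    split_ifs with h1 h2 h3
    · exact hg v
    · exact Term.subst_ground _ hg
    · exact hg v
    · exact hg v
  have hagree : ∀ v ≤ C.maxVar, g' v = g v := by
    intro v hv
    simp only [hg'def]
    rw [if_neg (by omega)]
  have hagreeA : ∀ a ∈ C.atoms, a.subst g' = a.subst g := by
    intro a ha
    exact (Atom.subst_congr a (fun v hv =>
      (hagree v (mem_vars_le_maxVar (mem_vars_of_mem_atom ha hv))).symm)).symm
  have htagree : ∀ a ∈ C.atoms, ∀ t ∈ a.args, t.subst g' = t.subst g := by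
    intro a ha t ht
    exact (Term.subst_congr t (fun v hv =>
      (hagree v (mem_vars_le_maxVar (mem_vars_of_mem_atom ha
        (List.mem_flatMap.2 ⟨t, ht, hv⟩)))).symm)).symm
  -- key value of g' on fresh variables
  have hkey : ∀ j, (hj : j < C.body.length) → (C.body[j]).pred ≠ eqP →
      ∀ i, (hi : i < (C.body[j]).args.length) → ((C.body[j]).args[i]).isPF = true →
      g' (base + Nat.pair j i) = ((C.body[j]).args[i]).subst g := by
    intro j hj hp i hi hPF
    simp only [hg'def]
    rw [if_pos (Nat.le_add_right _ _), Nat.add_sub_cancel_left, Nat.unpair_pair]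
    simp only [List.getD_eq_getElem _ _ hj]
    rw [if_neg hp]
    simp only [List.getD_eq_getElem _ _ hi]
    rw [if_pos hPF]
  -- all body atoms of the flattened clause hold under g'
  have hallbody : ∀ b ∈ (pfClause eqP C).body, b.subst g' ∈ I := by
    intro b hb
    rcases List.mem_append.1 hb with hb | hb
    · rcases List.mem_mapIdx.1 hb with ⟨j, hj, rfl⟩
      have hamem : C.body[j] ∈ C.body := List.getElem_mem hj
      have hamem' : C.body[j] ∈ C.atoms := List.mem_append.2 (Or.inr hamem)
      by_cases hp : (C.body[j]).pred = eqP
      · rw [pfArgs, if_pos hp, hagreeA _ hamem']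
        exact hbody _ hamem
      · have heq : (pfArgs eqP base j (C.body[j])).subst g' = (C.body[j]).subst g := by
          rw [pfArgs, if_neg hp]
          show (⟨(C.body[j]).pred, _⟩ : Atom P F).subst g' = (C.body[j]).subst g
          unfold Atom.subst
          simp only
          congr 1
          apply List.ext_getElem
          · simp
          · intro i h1 h2
            simp only [List.length_map] at h2
            simp only [List.getElem_map, List.getElem_mapIdx]
            by_cases hPF : ((C.body[j]).args[i]).isPF
            · rw [if_pos hPF, Term.subst_var, hkey j hj hp i (by simpa using h2) hPF]
            · rw [if_neg hPF]
              exact htagree _ hamem' _ (List.getElem_mem _)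
        rw [heq]
        exact hbody _ hamem
    · rcases List.mem_flatten.1 hb with ⟨l, hl, hbl⟩
      rcases List.mem_mapIdx.1 hl with ⟨j, hj, rfl⟩
      have hamem' : C.body[j] ∈ C.atoms := List.mem_append.2 (Or.inr (List.getElem_mem hj))
      rw [pfEqs] at hbl
      by_cases hp : (C.body[j]).pred = eqP
      · rw [if_pos hp] at hbl; simp at hbl
      · rw [if_neg hp] at hbl
        rcases List.mem_filterMap.1 hbl with ⟨⟨i, t⟩, hpt, hsome⟩
        rcases List.mem_mapIdx.1 hpt with ⟨i', hi', heq⟩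
        simp only [Prod.mk.injEq] at heq
        obtain ⟨rfl, rfl⟩ := heq
        by_cases hPF : ((C.body[j]).args[i']).isPF
        · rw [if_pos hPF] at hsome
          injection hsome with hb'
          subst hb'
          have hval : (eqAtom eqP ((C.body[j]).args[i'])
              (Term.var (base + Nat.pair j i'))).subst g'
              = ⟨eqP, [((C.body[j]).args[i']).subst g, ((C.body[j]).args[i']).subst g]⟩ := by
            unfold eqAtom Atom.subst
            simp only [List.map_cons, List.map_nil, Term.subst_var]
            rw [hkey j hj hp i' hi' hPF,
              htagree _ hamem' _ (List.getElem_mem _)]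
          rw [hval]
          exact hrefl _ (Term.subst_ground _ hg)
        · rw [if_neg hPF] at hsome
          simp at hsome
  -- apply the shifted clause
  have hmem : bsClause bar (pfClause eqP C) ∈ sh eqP bar M :=
    Set.mem_union_left _ ⟨pfClause eqP C, Set.mem_union_left _ ⟨C, hC, rfl⟩, rfl⟩
  have hmain := hI _ hmem g' hg' (fun b hb => hallbody b (List.mem_of_mem_filter hb))
  rcases hmain with ⟨a, ha, haI⟩
  rcases List.mem_append.1 ha with ha | ha
  · exact ⟨a, ha, by rw [← hagreeA a (List.mem_append.2 (Or.inl ha))]; exact haI⟩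
  · exfalso
    rcases List.mem_map.1 ha with ⟨b, hbf, rfl⟩
    have hbbody : b ∈ (pfClause eqP C).body := List.mem_of_mem_filter hbf
    have hbPF : b.hasPF = true := by simpa using List.of_mem_filter hbf
    have hbI : b.subst g' ∈ I := hallbody b hbbody
    have hsp : (b.pred, b.args.length) ∈ shiftedPreds (pf eqP M) :=
      ⟨pfClause eqP C, Set.mem_union_left _ ⟨C, hC, rfl⟩, b, hbbody, hbPF, rfl⟩
    have hcons : (⟨[], [⟨b.pred, rangeVars b.args.length⟩,
        ⟨bar b.pred, rangeVars b.args.length⟩]⟩ : Clause P F) ∈ sh eqP bar M :=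
      Set.mem_union_right _ ⟨(b.pred, b.args.length), hsp, rfl⟩
    set n := b.args.length with hn
    set h : ℕ → Term F := fun i => (b.subst g').args.getD i (g' 0) with hhdef
    have hlen : (b.subst g').args.length = n := by
      simp [Atom.subst, hn]
    have hgh : GroundSubst h := by
      intro i
      simp only [hhdef]
      by_cases hi : i < (b.subst g').args.length
      · have hi' : i < b.args.length := by simpa [Atom.subst] using hi
        rw [List.getD_eq_getElem _ _ hi]
        show ((b.args.map (Term.subst g'))[i]'(by simpa using hi')).IsGround
        rw [List.getElem_map]
        exact Term.subst_ground _ hg'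
      · rw [List.getD_eq_default _ _ (by omega)]
        exact hg' 0
    have hkey2 : ∀ p : P, (⟨p, rangeVars n⟩ : Atom P F).subst h
        = ⟨p, (b.subst g').args⟩ := by
      intro p
      unfold Atom.subst rangeVars
      congr 1
      apply List.ext_getElem
      · simp [hlen, hn]
      · intro i h1 h2
        simp only [List.getElem_map, List.getElem_range, Term.subst_var, hhdef]
        rw [List.getD_eq_getElem _ _ (by simpa [hlen] using h2)]
        simp [Atom.subst]
    have := hI _ hcons h hgh (by
      intro c hc
      simp only [List.mem_cons, List.mem_singleton, List.not_mem_nil, or_false] at hc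
      rcases hc with rfl | rfl
      · rw [hkey2]
        have : (⟨b.pred, (b.subst g').args⟩ : Atom P F) = b.subst g' := by
          simp [Atom.subst]
        rw [this]; exact hbI
      · rw [hkey2]
        have : (⟨bar b.pred, (b.subst g').args⟩ : Atom P F) = (barAtom bar b).subst g' := by
          simp [Atom.subst, barAtom]
        rw [this]; exact haI)
    rcases this with ⟨a, ha, _⟩
    simp at ha

end BUMG
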